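/- Let G be a graph on an even number n of vertices with m edges. Then G admits a balanced bipartition V(G) = A ∪ A^c with |A| = |A^c| = n/2 such that max{e(A), e(A^c)} ≤ (m + Δ(G) − δ(G))/4. -/

import Mathlib

open scoped Classical

/-- The number of edges of `G` with both endpoints in `A`. -/
noncomputable def edgesIn {V : Type*} [Fintype V] (G : SimpleGraph V) (A : Finset V) : ℕ :=
  (G.edgeFinset.filter fun e => ∀ v ∈ e, v ∈ A).card

namespace BalBip

open Finset

variable {V : Type*} [Fintype V]

/-- Ordered adjacent pairs with both ends in `A`. -/
noncomputable def pc (G : SimpleGraph V) (A : Finset V) : ℕ :=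
  #(Finset.univ.filter fun p : V × V => G.Adj p.1 p.2 ∧ p.1 ∈ A ∧ p.2 ∈ A)

/-- Ordered adjacent pairs leaving `A`. -/
noncomputable def xc (G : SimpleGraph V) (A : Finset V) : ℕ :=
  #(Finset.univ.filter fun p : V × V => G.Adj p.1 p.2 ∧ p.1 ∈ A ∧ p.2 ∉ A)

lemma pc_eq (G : SimpleGraph V) (A : Finset V) : pc G A = 2 * edgesIn G A := by
  classical
  let H : SimpleGraph V :=
    ⟨fun v w => G.Adj v w ∧ v ∈ A ∧ w ∈ A,
     ⟨fun v w h => ⟨h.1.symm, h.2.2, h.2.1⟩⟩,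
     ⟨fun v h => G.loopless.irrefl v h.1⟩⟩
  have hH : H.edgeFinset = G.edgeFinset.filter fun e => ∀ v ∈ e, v ∈ A := by
    ext e
    induction e with
    | _ x y =>
      simp only [SimpleGraph.mem_edgeFinset, SimpleGraph.mem_edgeSet, Finset.mem_filter]
      constructor
      · rintro ⟨h, h1, h2⟩
        refine ⟨h, fun v hv => ?_⟩
        rcases Sym2.mem_iff.1 hv with rfl | rfl <;> assumption
      · rintro ⟨h, hall⟩
        exact ⟨h, hall x (Sym2.mem_mk_left x y), hall y (Sym2.mem_mk_right x y)⟩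
  have h2 := H.two_mul_card_edgeFinset
  rw [hH] at h2
  rw [pc, edgesIn, ← h2]

lemma xc_compl (G : SimpleGraph V) (A : Finset V) : xc G Aᶜ = xc G A := by
  classical
  rw [xc, xc]
  apply Finset.card_bij' (fun p _ => Prod.swap p) (fun p _ => Prod.swap p)
  · intro p hp
    simp only [mem_filter, mem_univ, true_and, Finset.mem_compl, not_not] at hp ⊢
    exact ⟨hp.1.symm, hp.2.2, hp.2.1⟩
  · intro p hp
    simp only [mem_filter, mem_univ, true_and, Finset.mem_compl, not_not] at hp ⊢
    exact ⟨hp.1.symm, hp.2.2, hp.2.1⟩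
  · intro p _; simp
  · intro p _; simp

lemma degsum_eq (G : SimpleGraph V) (A : Finset V) :
    ∑ v ∈ A, G.degree v = pc G A + xc G A := by
  classical
  have hdeg : ∀ v, G.degree v = ∑ w, if G.Adj v w then 1 else 0 := by
    intro v
    rw [← Finset.card_filter]
    simp [SimpleGraph.degree, SimpleGraph.neighborFinset_eq_filter]
  rw [pc, xc, Finset.card_filter, Finset.card_filter,
    Fintype.sum_prod_type, Fintype.sum_prod_type, ← Finset.sum_add_distrib,
    ← Finset.filter_univ_mem A, Finset.sum_filter]
  refine Finset.sum_congr rfl fun v _ => ?_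
  by_cases hv : v ∈ A
  · rw [if_pos hv, hdeg v, ← Finset.sum_add_distrib]
    refine Finset.sum_congr rfl fun w _ => ?_
    by_cases ha : G.Adj v w <;> by_cases hw : w ∈ A <;> simp [ha, hw, hv]
  · rw [if_neg hv, eq_comm, ← Finset.sum_add_distrib]
    refine Finset.sum_eq_zero fun w _ => ?_
    simp [hv]

lemma four_split (G : SimpleGraph V) (A : Finset V) :
    pc G A + xc G A + (xc G Aᶜ + pc G Aᶜ) = 2 * #G.edgeFinset := by
  classical
  rw [SimpleGraph.two_mul_card_edgeFinset, pc, xc, pc, xc, Finset.card_filter,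
    Finset.card_filter, Finset.card_filter, Finset.card_filter, Finset.card_filter,
    ← Finset.sum_add_distrib, ← Finset.sum_add_distrib, ← Finset.sum_add_distrib]
  refine Finset.sum_congr rfl fun p _ => ?_
  rcases p with ⟨x, y⟩
  by_cases hadj : G.Adj x y <;> by_cases h1 : x ∈ A <;> by_cases h2 : y ∈ A <;>
    simp [hadj, h1, h2]

lemma sum_comm_card {α β : Type*} [Fintype α] [Fintype β] (P : α → β → Prop) :
    ∑ a : α, #(univ.filter fun b => P a b) = ∑ b : β, #(univ.filter fun a => P a b) := by
  simp_rw [Finset.card_filter]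
  exact Finset.sum_comm

variable {k : ℕ}

def pidx (i : Fin k) (b : Bool) : Fin (2*k) :=
  ⟨2*i.1 + (if b then 1 else 0), by have := i.2; split <;> omega⟩

variable (e : Fin (2*k) ≃ V)

noncomputable def pick (i : Fin k) (b : Bool) : V := e (pidx i b)

noncomputable def pidx1 (v : V) : Fin k := ⟨(e.symm v).1 / 2, by have := (e.symm v).2; omega⟩

noncomputable def pbit (v : V) : Bool := decide ((e.symm v).1 % 2 = 1)

lemma pidx1_pick (i : Fin k) (b : Bool) : pidx1 e (pick e i b) = i := by
  apply Fin.ext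
  simp only [pidx1, pick, Equiv.symm_apply_apply, pidx]
  rcases b <;> simp <;> omega

lemma pbit_pick (i : Fin k) (b : Bool) : pbit e (pick e i b) = b := by
  simp only [pbit, pick, Equiv.symm_apply_apply, pidx]
  rcases b <;> simp <;> omega

lemma pick_pidx1_pbit (v : V) : pick e (pidx1 e v) (pbit e v) = v := by
  have h2 := (e.symm v).2
  rw [pick, ← Equiv.apply_symm_apply e v]
  congr 1
  apply Fin.ext
  simp only [pidx, pidx1, pbit, Equiv.symm_apply_apply]
  by_cases h : (e.symm v).1 % 2 = 1 <;> simp [h] <;> omega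

noncomputable def part (s : Fin k → Bool) : Finset V :=
  univ.image (fun i => pick e i (s i))

lemma mem_part {s : Fin k → Bool} {v : V} : v ∈ part e s ↔ s (pidx1 e v) = pbit e v := by
  simp only [part, Finset.mem_image, mem_univ, true_and]
  constructor
  · rintro ⟨i, rfl⟩
    rw [pidx1_pick, pbit_pick]
  · intro h
    exact ⟨pidx1 e v, by rw [h, pick_pidx1_pbit]⟩

lemma not_mem_part {s : Fin k → Bool} {v : V} :
    v ∉ part e s ↔ s (pidx1 e v) = !(pbit e v) := by
  rw [mem_part]
  cases h1 : s (pidx1 e v) <;> cases h2 : pbit e v <;> simp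

lemma card_part (s : Fin k → Bool) : #(part e s) = k := by
  rw [part, Finset.card_image_of_injective _ ?_, card_univ, Fintype.card_fin]
  intro i j hij
  have hij' : pick e i (s i) = pick e j (s j) := hij
  have : pidx1 e (pick e i (s i)) = pidx1 e (pick e j (s j)) := by rw [hij']
  rwa [pidx1_pick, pidx1_pick] at this

lemma compl_part (s : Fin k → Bool) : (part e s)ᶜ = part e (fun i => !(s i)) := by
  ext v
  rw [Finset.mem_compl, not_mem_part, mem_part]
  cases h1 : s (pidx1 e v) <;> cases h2 : pbit e v <;> simp

lemma pbit_ne {v w : V} (hvw : v ≠ w) (h : pidx1 e v = pidx1 e w) :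
    pbit e v ≠ pbit e w := by
  intro hb
  apply hvw
  rw [← pick_pidx1_pbit e v, ← pick_pidx1_pbit e w, h, hb]

lemma count_signs_eq (i1 i2 : Fin k) (h : i1 ≠ i2) (b1 b2 c2 : Bool) :
    #(univ.filter fun s : Fin k → Bool => s i1 = b1 ∧ s i2 = b2)
      = #(univ.filter fun s : Fin k → Bool => s i1 = b1 ∧ s i2 = c2) := by
  apply Finset.card_bij' (fun s _ => Function.update s i2 c2)
    (fun s _ => Function.update s i2 b2)
  · intro s hs
    simp only [mem_filter, mem_univ, true_and] at hs
    rw [Function.update_idem, ← hs.2, Function.update_eq_self]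
  · intro s hs
    simp only [mem_filter, mem_univ, true_and] at hs
    rw [Function.update_idem, ← hs.2, Function.update_eq_self]
  · intro s hs
    simp only [mem_filter, mem_univ, true_and] at hs ⊢
    exact ⟨by rw [Function.update_of_ne h, hs.1], Function.update_self _ _ _⟩
  · intro s hs
    simp only [mem_filter, mem_univ, true_and] at hs ⊢
    exact ⟨by rw [Function.update_of_ne h, hs.1], Function.update_self _ _ _⟩

lemma count_core (i1 i2 : Fin k) (b1 b2 c2 : Bool) (hne : i1 = i2 → b1 ≠ b2) :
    #(univ.filter fun s : Fin k → Bool => s i1 = b1 ∧ s i2 = b2)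
      ≤ #(univ.filter fun s : Fin k → Bool => s i1 = b1 ∧ s i2 = c2) := by
  by_cases h : i1 = i2
  · subst h
    have hemp : (univ.filter fun s : Fin k → Bool => s i1 = b1 ∧ s i1 = b2) = ∅ := by
      ext s
      simp only [mem_filter, mem_univ, true_and, Finset.notMem_empty, iff_false, not_and]
      intro h1 h2
      exact hne rfl (h1 ▸ h2 ▸ rfl)
    rw [hemp]
    simp
  · exact le_of_eq (count_signs_eq i1 i2 h b1 b2 c2)

lemma sum_pc_le_sum_xc (G : SimpleGraph V) :
    ∑ s : Fin k → Bool, pc G (part e s) ≤ ∑ s : Fin k → Bool, xc G (part e s) := by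
  classical
  unfold pc xc
  have hcomm1 : ∑ s : Fin k → Bool, #(univ.filter fun p : V × V =>
        G.Adj p.1 p.2 ∧ p.1 ∈ part e s ∧ p.2 ∈ part e s)
      = ∑ p : V × V, #(univ.filter fun s : Fin k → Bool =>
        G.Adj p.1 p.2 ∧ p.1 ∈ part e s ∧ p.2 ∈ part e s) := by
    simp_rw [Finset.card_filter]
    exact Finset.sum_comm
  have hcomm2 : ∑ s : Fin k → Bool, #(univ.filter fun p : V × V =>
        G.Adj p.1 p.2 ∧ p.1 ∈ part e s ∧ p.2 ∉ part e s)
      = ∑ p : V × V, #(univ.filter fun s : Fin k → Bool =>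
        G.Adj p.1 p.2 ∧ p.1 ∈ part e s ∧ p.2 ∉ part e s) := by
    simp_rw [Finset.card_filter]
    exact Finset.sum_comm
  rw [hcomm1, hcomm2]
  apply Finset.sum_le_sum
  intro p _
  by_cases hadj : G.Adj p.1 p.2
  · have hL : (univ.filter fun s : Fin k → Bool =>
        G.Adj p.1 p.2 ∧ p.1 ∈ part e s ∧ p.2 ∈ part e s)
        = univ.filter fun s : Fin k → Bool =>
          s (pidx1 e p.1) = pbit e p.1 ∧ s (pidx1 e p.2) = pbit e p.2 := by
      apply Finset.filter_congr
      intro s _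
      simp [hadj, mem_part]
    have hR : (univ.filter fun s : Fin k → Bool =>
        G.Adj p.1 p.2 ∧ p.1 ∈ part e s ∧ p.2 ∉ part e s)
        = univ.filter fun s : Fin k → Bool =>
          s (pidx1 e p.1) = pbit e p.1 ∧ s (pidx1 e p.2) = !(pbit e p.2) := by
      apply Finset.filter_congr
      intro s _
      simp only [hadj, true_and]
      rw [mem_part, not_mem_part]
    rw [hL, hR]
    exact count_core _ _ _ _ _ fun hi => pbit_ne e hadj.ne hi
  · have hL : (univ.filter fun s : Fin k → Bool =>
        G.Adj p.1 p.2 ∧ p.1 ∈ part e s ∧ p.2 ∈ part e s) = ∅ := by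
      ext s; simp [hadj]
    have hR : (univ.filter fun s : Fin k → Bool =>
        G.Adj p.1 p.2 ∧ p.1 ∈ part e s ∧ p.2 ∉ part e s) = ∅ := by
      ext s; simp [hadj]
    rw [hL, hR]

/-- negate all signs -/
def negE : (Fin k → Bool) ≃ (Fin k → Bool) where
  toFun s := fun i => !(s i)
  invFun s := fun i => !(s i)
  left_inv s := by funext i; simp
  right_inv s := by funext i; simp

lemma sum_f_compl (f : Finset V → ℕ) :
    ∑ s : Fin k → Bool, f (part e s)ᶜ = ∑ s : Fin k → Bool, f (part e s) := by
  have h1 : ∀ s : Fin k → Bool, f (part e s)ᶜ = (fun t => f (part e t)) (negE s) := by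
    intro s
    simp only [negE, Equiv.coe_fn_mk]
    rw [compl_part]
  calc ∑ s : Fin k → Bool, f (part e s)ᶜ
      = ∑ s : Fin k → Bool, (fun t => f (part e t)) (negE s) :=
        Finset.sum_congr rfl fun s _ => h1 s
    _ = ∑ s : Fin k → Bool, f (part e s) := Equiv.sum_comp negE (fun t => f (part e t))

lemma exists_good (G : SimpleGraph V) :
    ∃ s : Fin k → Bool, pc G (part e s) + pc G (part e s)ᶜ ≤ #G.edgeFinset := by
  classical
  by_contra hcon
  push_neg at hcon
  set N := Fintype.card (Fin k → Bool) with hN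
  have hNpos : 0 < N := Fintype.card_pos
  set m := #G.edgeFinset with hm
  have htot : ∑ s : Fin k → Bool, (pc G (part e s) + xc G (part e s) +
      (xc G (part e s)ᶜ + pc G (part e s)ᶜ)) = N * (2 * m) := by
    rw [Finset.sum_congr rfl fun s _ => four_split G (part e s)]
    rw [Finset.sum_const, card_univ, smul_eq_mul]
  have hsplit : ∑ s : Fin k → Bool, (pc G (part e s) + xc G (part e s) +
      (xc G (part e s)ᶜ + pc G (part e s)ᶜ))
      = (∑ s : Fin k → Bool, pc G (part e s) + ∑ s : Fin k → Bool, xc G (part e s))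
        + (∑ s : Fin k → Bool, xc G (part e s)ᶜ + ∑ s : Fin k → Bool, pc G (part e s)ᶜ) := by
    rw [Finset.sum_add_distrib, Finset.sum_add_distrib, Finset.sum_add_distrib]
  have hx1 : ∑ s : Fin k → Bool, pc G (part e s) ≤ ∑ s : Fin k → Bool, xc G (part e s) :=
    sum_pc_le_sum_xc e G
  have hx2 : ∑ s : Fin k → Bool, pc G (part e s)ᶜ ≤ ∑ s : Fin k → Bool, xc G (part e s)ᶜ := by
    rw [sum_f_compl e (pc G), sum_f_compl e (xc G)]
    exact hx1
  have hlow : N * (m + 1) ≤ ∑ s : Fin k → Bool, (pc G (part e s) + pc G (part e s)ᶜ) := by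
    have := Finset.card_nsmul_le_sum (univ : Finset (Fin k → Bool))
      (fun s => pc G (part e s) + pc G (part e s)ᶜ) (m + 1)
      (fun s _ => hcon s)
    rwa [card_univ, smul_eq_mul] at this
  rw [Finset.sum_add_distrib] at hlow
  have key : 2 * (N * (m + 1)) ≤ N * (2 * m) := by
    calc 2 * (N * (m + 1))
        ≤ 2 * (∑ s : Fin k → Bool, pc G (part e s) + ∑ s : Fin k → Bool, pc G (part e s)ᶜ) := by
          omega
      _ ≤ (∑ s : Fin k → Bool, pc G (part e s) + ∑ s : Fin k → Bool, xc G (part e s))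
            + (∑ s : Fin k → Bool, xc G (part e s)ᶜ + ∑ s : Fin k → Bool, pc G (part e s)ᶜ) := by
          omega
      _ = N * (2 * m) := by rw [← hsplit, htot]
  nlinarith [hNpos, key]

lemma pick_inj (t : Fin k → Bool) : Function.Injective (fun i => pick e i (t i)) := by
  intro i j hij
  have hij' : pick e i (t i) = pick e j (t j) := hij
  have h2 : pidx1 e (pick e i (t i)) = pidx1 e (pick e j (t j)) := by rw [hij']
  rwa [pidx1_pick, pidx1_pick] at h2

lemma telescope (g : ℕ → ℤ) (k : ℕ) (gmono : ∀ a b : ℕ, a ≤ b → b < 2*k → g a ≤ g b) :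
    ∀ K, 0 < K → K ≤ k → ∑ j ∈ Finset.range K, (g (2*j+1) - g (2*j)) ≤ g (2*K - 1) - g 0 := by
  intro K
  induction K with
  | zero => intro h; exact absurd h (lt_irrefl 0)
  | succ K ih =>
    intro _ hK1
    rcases Nat.eq_zero_or_pos K with rfl | hKpos
    · norm_num
    · rw [Finset.sum_range_succ]
      have h1 := ih hKpos (by omega)
      have h2 : g (2*K - 1) ≤ g (2*K) := gmono _ _ (by omega) (by omega)
      have h3 : 2*(K+1) - 1 = 2*K+1 := by omega
      rw [h3]
      linarith

lemma deg_gap (G : SimpleGraph V) (hk : 0 < k)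
    (hmono : Monotone fun j : Fin (2*k) => G.degree (e j)) (s : Fin k → Bool) :
    |∑ v ∈ part e s, (G.degree v : ℤ) - ∑ v ∈ (part e s)ᶜ, (G.degree v : ℤ)|
      ≤ (G.maxDegree : ℤ) - (G.minDegree : ℤ) := by
  classical
  let g : ℕ → ℤ := fun j => if h : j < 2*k then (G.degree (e ⟨j, h⟩) : ℤ) else 0
  have gmono : ∀ a b : ℕ, a ≤ b → b < 2*k → g a ≤ g b := by
    intro a b hab hb
    have ha : a < 2*k := by omega
    simp only [g, dif_pos ha, dif_pos hb]
    exact_mod_cast hmono (show (⟨a, ha⟩ : Fin (2*k)) ≤ ⟨b, hb⟩ from hab)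
  have hpickg : ∀ (i : Fin k) (b : Bool),
      (G.degree (pick e i b) : ℤ) = g (2*i.1 + (if b then 1 else 0)) := by
    intro i b
    have hlt : 2*i.1 + (if b then 1 else 0) < 2*k := by
      have := i.2; split <;> omega
    simp only [g, dif_pos hlt, pick, pidx]
    rfl
  have hsum : ∀ t : Fin k → Bool,
      ∑ v ∈ part e t, (G.degree v : ℤ) = ∑ i : Fin k, (G.degree (pick e i (t i)) : ℤ) := by
    intro t
    rw [part, Finset.sum_image]
    intro i _ j _ hij
    exact pick_inj e t hij
  rw [hsum s, compl_part, hsum (fun i => !(s i)), ← Finset.sum_sub_distrib]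
  have habs : ∀ i : Fin k,
      |(G.degree (pick e i (s i)) : ℤ) - (G.degree (pick e i (!(s i))) : ℤ)|
        = g (2*i.1+1) - g (2*i.1) := by
    intro i
    have hge : g (2*i.1) ≤ g (2*i.1+1) := gmono _ _ (by omega) (by have := i.2; omega)
    cases hsi : s i
    · rw [hpickg, hpickg]
      norm_num
      rw [abs_sub_comm, abs_of_nonneg (by linarith)]
    · rw [hpickg, hpickg]
      norm_num
      exact hge
  calc |∑ i : Fin k, ((G.degree (pick e i (s i)) : ℤ) - (G.degree (pick e i (!(s i))) : ℤ))|
      ≤ ∑ i : Fin k, |(G.degree (pick e i (s i)) : ℤ) - (G.degree (pick e i (!(s i))) : ℤ)| :=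
        Finset.abs_sum_le_sum_abs _ _
    _ = ∑ i : Fin k, (g (2*i.1+1) - g (2*i.1)) := Finset.sum_congr rfl fun i _ => habs i
    _ = ∑ j ∈ Finset.range k, (g (2*j+1) - g (2*j)) :=
        Fin.sum_univ_eq_sum_range (fun j => g (2*j+1) - g (2*j)) k
    _ ≤ g (2*k - 1) - g 0 := telescope g k gmono k hk le_rfl
    _ ≤ (G.maxDegree : ℤ) - (G.minDegree : ℤ) := by
        have h1 : g (2*k - 1) ≤ (G.maxDegree : ℤ) := by
          have hlt : 2*k - 1 < 2*k := by omega
          simp only [g, dif_pos hlt]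
          exact_mod_cast G.degree_le_maxDegree _
        have h2 : (G.minDegree : ℤ) ≤ g 0 := by
          have hlt : 0 < 2*k := by omega
          simp only [g, dif_pos hlt]
          exact_mod_cast G.minDegree_le_degree _
        linarith

end BalBip

theorem stmt_14 {V : Type*} [Fintype V] (G : SimpleGraph V)
    (heven : Even (Fintype.card V)) :
    ∃ A : Finset V, 2 * A.card = Fintype.card V ∧
      (max (edgesIn G A) (edgesIn G Aᶜ) : ℝ) ≤
        (G.edgeFinset.card + G.maxDegree - G.minDegree : ℝ) / 4 := by
  classical
  obtain ⟨k, hk⟩ := heven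
  have hcard : Fintype.card V = 2*k := by omega
  rcases Nat.eq_zero_or_pos k with rfl | hkpos
  · have hVempty : IsEmpty V := by
      rw [← Fintype.card_eq_zero_iff]
      omega
    refine ⟨∅, by rw [Finset.card_empty]; omega, ?_⟩
    have hedge : G.edgeFinset = ∅ := by
      ext e0
      refine e0.ind ?_
      intro x y
      exact (hVempty.false x).elim
    have hmax : G.maxDegree = 0 := by
      simp only [SimpleGraph.maxDegree, Finset.univ_eq_empty, Finset.image_empty,
        Finset.max_empty]
      rfl
    have hmin : G.minDegree = 0 := by
      simp [SimpleGraph.minDegree, Finset.univ_eq_empty]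
    simp [edgesIn, hedge, hmax, hmin]
  · let ψ : V ≃ Fin (2*k) := Fintype.equivFinOfCardEq hcard
    let f : Fin (2*k) → ℕ := fun j => G.degree (ψ.symm j)
    let σ := Tuple.sort f
    let e : Fin (2*k) ≃ V := σ.trans ψ.symm
    have hmono : Monotone fun j : Fin (2*k) => G.degree (e j) := Tuple.monotone_sort f
    obtain ⟨s, hs⟩ := BalBip.exists_good e G
    refine ⟨BalBip.part e s, ?_, ?_⟩
    · rw [BalBip.card_part]; omega
    · set A := BalBip.part e s with hA
      set m := G.edgeFinset.card with hm
      have h1 : BalBip.pc G A = 2 * edgesIn G A := BalBip.pc_eq G A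
      have h2 : BalBip.pc G Aᶜ = 2 * edgesIn G Aᶜ := BalBip.pc_eq G Aᶜ
      have hgap := BalBip.deg_gap e G hkpos hmono s
      have hd1 := BalBip.degsum_eq G A
      have hd2 := BalBip.degsum_eq G Aᶜ
      have hxc : BalBip.xc G Aᶜ = BalBip.xc G A := BalBip.xc_compl G A
      have hDP : (BalBip.pc G A : ℤ) - BalBip.pc G Aᶜ
          = ∑ v ∈ A, (G.degree v : ℤ) - ∑ v ∈ Aᶜ, (G.degree v : ℤ) := by
        have d1 : ∑ v ∈ A, (G.degree v : ℤ) = BalBip.pc G A + BalBip.xc G A := by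
          exact_mod_cast hd1
        have d2 : ∑ v ∈ Aᶜ, (G.degree v : ℤ) = BalBip.pc G Aᶜ + BalBip.xc G Aᶜ := by
          exact_mod_cast hd2
        have hxc' : (BalBip.xc G Aᶜ : ℤ) = BalBip.xc G A := by exact_mod_cast hxc
        rw [d1, d2, hxc']
        ring
      have habs : |(BalBip.pc G A : ℤ) - BalBip.pc G Aᶜ|
          ≤ (G.maxDegree : ℤ) - G.minDegree := by
        rw [hDP]
        exact hgap
      obtain ⟨hub1, hub2⟩ := abs_le.mp habs
      have hsum' : (BalBip.pc G A : ℤ) + BalBip.pc G Aᶜ ≤ m := by exact_mod_cast hs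
      have hc1 : (BalBip.pc G A : ℤ) = 2 * edgesIn G A := by exact_mod_cast h1
      have hc2 : (BalBip.pc G Aᶜ : ℤ) = 2 * edgesIn G Aᶜ := by exact_mod_cast h2
      have e1le : 4 * (edgesIn G A : ℤ) ≤ m + G.maxDegree - G.minDegree := by linarith
      have e2le : 4 * (edgesIn G Aᶜ : ℤ) ≤ m + G.maxDegree - G.minDegree := by linarith
      apply max_le
      · have h4 : ((4 * (edgesIn G A : ℤ) : ℤ) : ℝ) ≤ ((m + G.maxDegree - G.minDegree : ℤ) : ℝ) :=
          Int.cast_le.mpr e1le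
        push_cast at h4
        linarith
      · have h4 : ((4 * (edgesIn G Aᶜ : ℤ) : ℤ) : ℝ) ≤ ((m + G.maxDegree - G.minDegree : ℤ) : ℝ) :=
          Int.cast_le.mpr e2le
        push_cast at h4
        linarith
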